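/- Let π ∈ S_d with π(j+1) = j and π(j) ≠ j+1 for some 1 ≤ j < d. Define π''' on {1,...,d}∖{j} by π'''(j+1) = π(j) and π'''(k) = π(k) for other k. Then aex(π''') + 1 ≤ aex(π). -/

import Mathlib

/-- The number of antiexceedances of a permutation: indices `i` with `π i ≤ i`. -/
def aex {d : ℕ} (π : Equiv.Perm (Fin d)) : ℕ :=
  (Finset.univ.filter (fun i => π i ≤ i)).card

/-- Given `π ∈ S_d` with `π(j+1) = j` and `π(j) ≠ j+1`, the permutation `π'''`
of `{1,…,d}∖{j}` defined by `π'''(j+1) = π(j)` and `π'''(k) = π(k)` otherwise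
satisfies `aex(π''') + 1 ≤ aex(π)`. -/
theorem aex_pi'''_succ_le (d : ℕ) (π : Equiv.Perm (Fin d)) (j j1 : Fin d)
    (hj1 : (j1 : ℕ) = (j : ℕ) + 1)
    (hπj1 : π j1 = j) (hnice : π j ≠ j1) :
    ((Finset.univ.erase j).filter
        (fun k => (if k = j1 then π j else π k) ≤ k)).card + 1
      ≤ aex π := by
  set S' := (Finset.univ.erase j).filter
      (fun k => (if k = j1 then π j else π k) ≤ k) with hS'
  have hjne : j ≠ j1 := by
    intro h
    have := congrArg (Fin.val) h
    omega
  have hjS' : j ∉ S' := by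
    intro h
    exact (Finset.mem_erase.mp (Finset.mem_filter.mp h).1).1 rfl
  have hcard : S'.card + 1 = (insert j S').card := by
    rw [Finset.card_insert_of_notMem hjS']
  rw [hcard]
  apply Finset.card_le_card_of_injOn (fun k => Equiv.swap j j1 k)
  · intro k hk
    simp only [Finset.mem_coe, Finset.mem_filter, Finset.mem_univ, true_and, aex]
    rcases Finset.mem_insert.mp hk with rfl | hkS'
    · rw [Equiv.swap_apply_left, hπj1]
      rw [Fin.le_def]; omega
    · have hk' := Finset.mem_filter.mp hkS'
      have hkj : k ≠ j := (Finset.mem_erase.mp hk'.1).1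
      by_cases hkj1 : k = j1
      · rw [hkj1, Equiv.swap_apply_right]
        have hle : π j ≤ j1 := by
          have := hk'.2
          simp only [hkj1, if_pos] at this
          exact this
        have hne : (π j : ℕ) ≠ (j1 : ℕ) := fun h => hnice (Fin.ext h)
        rw [Fin.le_def] at hle ⊢
        omega
      · rw [Equiv.swap_apply_of_ne_of_ne hkj hkj1]
        simpa [hkj1] using hk'.2
  · exact fun a _ b _ h => (Equiv.swap j j1).injective h
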